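/- Suppose g : [0,∞) → [0,∞) is differentiable with g'(t) ≤ γ(t)g(t) + α(t)g(t)^p + β(t), p > 1, α, β ≥ 0. Let ν(t) = exp(−∫₀ᵗ γ). Assume ω > 0 satisfies β(t)ν(t)^p/α(t) ≤ ω^p for all t ≥ 0 (interpreted as β(t)ν(t)^p ≤ ω^p α(t)), and that (g(0)+ω)^{1−p} > (p−1)∫₀^∞ α(ξ)/ν(ξ)^{p−1} dξ. Then for all t ≥ 0, (g(t)ν(t) + ω)^{p−1} ≤ 1 / [ (g(0)+ω)^{1−p} − (p−1)∫₀ᵗ α(ξ)/ν(ξ)^{p−1} dξ ]. -/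

import Mathlib

open MeasureTheory intervalIntegral Real Set
open scoped NNReal

/-- continuous L¹ approximation on a compact interval -/
lemma my_cont_approx {f : ℝ → ℝ} {T : ℝ} (hf : IntegrableOn f (Icc 0 T)) {δ : ℝ} (hδ : 0 < δ) :
    ∃ φ : ℝ → ℝ, Continuous φ ∧ (∫ x in Icc (0:ℝ) T, |f x - φ x|) ≤ δ := by
  have hind : Integrable ((Icc (0:ℝ) T).indicator f) :=
    (integrable_indicator_iff measurableSet_Icc).2 hf
  obtain ⟨φ, -, hint, hcont, hφi⟩ := hind.exists_hasCompactSupport_integral_sub_le hδ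
  refine ⟨φ, hcont, ?_⟩
  have h1 : (∫ x in Icc (0:ℝ) T, |f x - φ x|)
      = ∫ x in Icc (0:ℝ) T, |(Icc (0:ℝ) T).indicator f x - φ x| := by
    refine setIntegral_congr_fun measurableSet_Icc fun x hx => ?_
    rw [Set.indicator_of_mem hx]
  rw [h1]
  calc (∫ x in Icc (0:ℝ) T, |(Icc (0:ℝ) T).indicator f x - φ x|)
      ≤ ∫ x, |(Icc (0:ℝ) T).indicator f x - φ x| := by
        refine setIntegral_le_integral ((hind.sub hφi).abs) ?_
        exact Filter.Eventually.of_forall fun x => abs_nonneg _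
    _ ≤ δ := by simpa [Real.norm_eq_abs] using hint

/-- Lipschitz estimate for x ↦ x^e, e < 0, on [m, ∞) -/
lemma my_rpow_lip {e m : ℝ} (he : e < 0) (hm : 0 < m) :
    ∀ x y : ℝ, m ≤ x → m ≤ y → x ≤ y → x ^ e - y ^ e ≤ (-e) * m ^ (e - 1) * (y - x) := by
  intro x y hx hy hxy
  have hx0 : 0 < x := lt_of_lt_of_le hm hx
  have key : y ^ e - x ^ e = ∫ s in x..y, e * s ^ (e - 1) := by
    rw [intervalIntegral.integral_eq_sub_of_hasDerivAt (f := fun s => s ^ e)]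
    · intro s hs
      rw [Set.uIcc_of_le hxy] at hs
      exact Real.hasDerivAt_rpow_const (Or.inl (ne_of_gt (lt_of_lt_of_le hm (le_trans hx hs.1))))
    · apply ContinuousOn.intervalIntegrable
      apply ContinuousOn.mul continuousOn_const
      apply ContinuousOn.rpow_const continuousOn_id
      intro s hs
      rw [Set.uIcc_of_le hxy] at hs
      exact Or.inl (ne_of_gt (lt_of_lt_of_le hm (le_trans hx hs.1)))
  have h2 : x ^ e - y ^ e = ∫ s in x..y, (-e) * s ^ (e - 1) := by
    rw [← neg_sub, key, ← intervalIntegral.integral_neg]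
    congr 1
    ext s
    ring
  rw [h2]
  have hconst : ((-e) * m ^ (e - 1)) * (y - x) = ∫ s in x..y, (-e) * m ^ (e - 1) := by
    simp [intervalIntegral.integral_const, smul_eq_mul]
    ring
  rw [hconst]
  apply intervalIntegral.integral_mono_on hxy
  · apply ContinuousOn.intervalIntegrable
    apply ContinuousOn.mul continuousOn_const
    apply ContinuousOn.rpow_const continuousOn_id
    intro s hs
    rw [Set.uIcc_of_le hxy] at hs
    exact Or.inl (ne_of_gt (lt_of_lt_of_le hm (le_trans hx hs.1)))
  · exact intervalIntegrable_const
  · intro s hs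
    have hms : m ≤ s := le_trans hx hs.1
    have : s ^ (e - 1) ≤ m ^ (e - 1) :=
      Real.rpow_le_rpow_of_nonpos hm hms (by linarith)
    have hne : 0 < -e := by linarith
    nlinarith

lemma my_rpow_lip_abs {e m : ℝ} (he : e < 0) (hm : 0 < m) (x y : ℝ) (hx : m ≤ x) (hy : m ≤ y) :
    |x ^ e - y ^ e| ≤ (-e) * m ^ (e - 1) * |x - y| := by
  rcases le_total x y with h | h
  · rw [abs_sub_comm x y, abs_of_nonneg (sub_nonneg.2 h),
      abs_of_nonneg (sub_nonneg.2 (Real.rpow_le_rpow_of_nonpos (lt_of_lt_of_le hm hx) h he.le))]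
    exact my_rpow_lip he hm x y hx hy h
  · rw [abs_of_nonneg (sub_nonneg.2 h), abs_sub_comm,
      abs_of_nonneg (sub_nonneg.2 (Real.rpow_le_rpow_of_nonpos (lt_of_lt_of_le hm hy) h he.le))]
    exact my_rpow_lip he hm y x hy hx h

lemma my_rpow_add_le {x y p : ℝ} (hx : 0 ≤ x) (hy : 0 ≤ y) (hp : 1 ≤ p) :
    x ^ p + y ^ p ≤ (x + y) ^ p := by
  have h := NNReal.add_rpow_le_rpow_add x.toNNReal y.toNNReal hp
  have h2 : ((x.toNNReal ^ p + y.toNNReal ^ p : ℝ≥0) : ℝ)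
      ≤ (((x.toNNReal + y.toNNReal) ^ p : ℝ≥0) : ℝ) := NNReal.coe_le_coe.2 h
  push_cast at h2
  rwa [Real.coe_toNNReal x hx, Real.coe_toNNReal y hy] at h2


lemma my_gronwall_prod (g γ c ν : ℝ → ℝ) (T : ℝ) (hT : 0 ≤ T)
    (hγi : ∀ a b : ℝ, IntervalIntegrable γ volume a b)
    (hc : IntegrableOn c (Icc 0 T))
    (hgdiff : Differentiable ℝ g) (hgpos : ∀ s ∈ Icc 0 T, 0 ≤ g s)
    (hcpos : ∀ s ∈ Icc 0 T, 0 ≤ c s)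
    (hder : ∀ s ∈ Icc 0 T, deriv g s ≤ γ s * g s + c s)
    (hν : ∀ s, ν s = Real.exp (-∫ x in (0:ℝ)..s, γ x)) :
    g T * ν T - g 0 ≤ ∫ x in (0:ℝ)..T, c x * ν x := by
  have hγI : IntegrableOn γ (Icc 0 T) :=
    (integrableOn_Icc_iff_integrableOn_Ioc enorm_ne_top).2
      ((intervalIntegrable_iff_integrableOn_Ioc_of_le hT).1 (hγi 0 T))
  have toII : ∀ {f : ℝ → ℝ}, IntegrableOn f (Icc 0 T) → IntervalIntegrable f volume 0 T :=
    fun h => (intervalIntegrable_iff_integrableOn_Ioc_of_le hT).2 (h.mono_set Ioc_subset_Icc_self)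
  set F : ℝ → ℝ := fun s => ∫ x in (0:ℝ)..s, γ x with hF
  have hFc : Continuous F := intervalIntegral.continuous_primitive hγi 0
  have hνc : Continuous ν :=
    (Real.continuous_exp.comp hFc.neg).congr fun s => (hν s).symm
  have hνpos : ∀ s, 0 < ν s := fun s => (hν s) ▸ Real.exp_pos _
  -- bound for g
  obtain ⟨M0, hM0⟩ := (isCompact_Icc (a := (0:ℝ)) (b := T)).exists_bound_of_continuousOn
    hgdiff.continuous.continuousOn
  set M : ℝ := max M0 0 with hM
  have hgM : ∀ s ∈ Icc (0:ℝ) T, g s ≤ M := fun s hs =>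
    le_trans (le_trans (le_abs_self _) (by simpa [Real.norm_eq_abs] using hM0 s hs))
      (le_max_left _ _)
  have hMnn : 0 ≤ M := le_max_right _ _
  set B : ℝ := ∫ x in Icc (0:ℝ) T, |γ x| with hBdef
  have hBnn : 0 ≤ B := setIntegral_nonneg measurableSet_Icc fun x _ => abs_nonneg _
  set K : ℝ := Real.exp (B + 1) with hKdef
  have hKpos : 0 < K := Real.exp_pos _
  set Cq : ℝ := ∫ x in Icc (0:ℝ) T, c x with hCqdef
  have hCqnn : 0 ≤ Cq := setIntegral_nonneg measurableSet_Icc hcpos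
  set CC : ℝ := 3*M*K + 2*K*Cq with hCC
  have hCCnn : 0 ≤ CC := by positivity
  have habsF : ∀ s ∈ Icc (0:ℝ) T, |F s| ≤ B := by
    intro s hs
    calc |F s| ≤ ∫ x in (0:ℝ)..s, |γ x| :=
          intervalIntegral.abs_integral_le_integral_abs hs.1
      _ = ∫ x in Ioc (0:ℝ) s, |γ x| := intervalIntegral.integral_of_le hs.1
      _ ≤ B := by
          refine setIntegral_mono_set hγI.abs
            (Filter.Eventually.of_forall fun x => abs_nonneg _) ?_
          exact HasSubset.Subset.eventuallyLE
            (fun x hx => ⟨le_of_lt hx.1, le_trans hx.2 hs.2⟩)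
  -- key estimate for each 0 < δ ≤ 1
  have key : ∀ δ : ℝ, 0 < δ → δ ≤ 1 →
      g T * ν T - g 0 ≤ (∫ x in (0:ℝ)..T, c x * ν x) + CC * δ := by
    intro δ hδ hδ1
    obtain ⟨φ, hφc, hφd⟩ := my_cont_approx hγI hδ
    set F' : ℝ → ℝ := fun s => ∫ x in (0:ℝ)..s, φ x with hF'
    have HF' : ∀ s, HasDerivAt F' (φ s) s := fun s =>
      intervalIntegral.integral_hasDerivAt_right (hφc.intervalIntegrable 0 s)
        (hφc.stronglyMeasurableAtFilter _ _) hφc.continuousAt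
    set E : ℝ → ℝ := fun s => Real.exp (-(F' s)) with hE
    have HE : ∀ s, HasDerivAt E (Real.exp (-(F' s)) * (-(φ s))) s := fun s => ((HF' s).neg).exp
    have hEc : Continuous E :=
      Real.continuous_exp.comp ((intervalIntegral.continuous_primitive
        (fun a b => hφc.intervalIntegrable a b) 0).neg)
    have hEpos : ∀ s, 0 < E s := fun s => Real.exp_pos _
    have hφI : IntegrableOn φ (Icc 0 T) := hφc.integrableOn_Icc
    have habsI : IntegrableOn (fun x => |γ x - φ x|) (Icc 0 T) := (hγI.sub hφI).abs
    have hdiffF : ∀ s ∈ Icc (0:ℝ) T, |F' s - F s| ≤ δ := by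
      intro s hs
      have heq : F' s - F s = ∫ x in (0:ℝ)..s, (φ x - γ x) := by
        rw [intervalIntegral.integral_sub (hφc.intervalIntegrable 0 s) (hγi 0 s)]
      rw [heq]
      calc |∫ x in (0:ℝ)..s, (φ x - γ x)| ≤ ∫ x in (0:ℝ)..s, |φ x - γ x| :=
            intervalIntegral.abs_integral_le_integral_abs hs.1
        _ = ∫ x in Ioc (0:ℝ) s, |φ x - γ x| := intervalIntegral.integral_of_le hs.1
        _ ≤ ∫ x in Icc (0:ℝ) T, |φ x - γ x| := by
            refine setIntegral_mono_set ((hφI.sub hγI).abs)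
              (Filter.Eventually.of_forall fun x => abs_nonneg _) ?_
            exact HasSubset.Subset.eventuallyLE
              (fun x hx => ⟨le_of_lt hx.1, le_trans hx.2 hs.2⟩)
        _ = ∫ x in Icc (0:ℝ) T, |γ x - φ x| := by simp [abs_sub_comm]
        _ ≤ δ := hφd
    have hEK : ∀ s ∈ Icc (0:ℝ) T, E s ≤ K := by
      intro s hs
      have h1 := habsF s hs
      have h2 := hdiffF s hs
      show Real.exp (-(F' s)) ≤ Real.exp (B + 1)
      apply Real.exp_le_exp.2
      have ha := abs_le.1 h1
      have hb := abs_le.1 h2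
      linarith [ha.1, ha.2, hb.1, hb.2]
    have hνK : ∀ s ∈ Icc (0:ℝ) T, ν s ≤ K := by
      intro s hs
      rw [hν s]
      show Real.exp (-(F s)) ≤ Real.exp (B + 1)
      apply Real.exp_le_exp.2
      have ha := abs_le.1 (habsF s hs)
      linarith [ha.1, ha.2]
    have hEν : ∀ s ∈ Icc (0:ℝ) T, |E s - ν s| ≤ 2 * K * δ := by
      intro s hs
      have hsplit : E s = ν s * Real.exp (F s - F' s) := by
        rw [hν s, ← Real.exp_add]
        show Real.exp (-(F' s)) = Real.exp (-(F s) + (F s - F' s))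
        congr 1
        ring
      have h2 := hdiffF s hs
      have habs1 : |F s - F' s| ≤ 1 := by
        rw [abs_sub_comm]; exact le_trans h2 hδ1
      have hexp := Real.abs_exp_sub_one_le habs1
      have hEsub : E s - ν s = ν s * (Real.exp (F s - F' s) - 1) := by
        rw [hsplit]; ring
      calc |E s - ν s| = ν s * |Real.exp (F s - F' s) - 1| := by
            rw [hEsub, abs_mul, abs_of_pos (hνpos s)]
        _ ≤ ν s * (2 * |F s - F' s|) := by
            apply mul_le_mul_of_nonneg_left hexp (hνpos s).le
        _ ≤ K * (2 * δ) := by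
            apply mul_le_mul (hνK s hs) _ (by positivity) hKpos.le
            have : |F s - F' s| ≤ δ := by rw [abs_sub_comm]; exact h2
            linarith
        _ = 2 * K * δ := by ring
    -- FTC inequality for u = g * E
    set u : ℝ → ℝ := fun s => g s * E s with hu
    set ψ : ℝ → ℝ := fun x => (c x + |γ x - φ x| * g x) * E x with hψ
    have hψint : IntegrableOn ψ (Icc 0 T) := by
      apply IntegrableOn.mul_continuousOn _ hEc.continuousOn isCompact_Icc
      exact hc.add (habsI.mul_continuousOn hgdiff.continuous.continuousOn isCompact_Icc)
    have husub : u T - u 0 ≤ ∫ x in (0:ℝ)..T, ψ x := by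
      refine sub_le_integral_of_hasDeriv_right_of_le hT
        ((hgdiff.continuous.mul hEc).continuousOn)
        (g' := fun x => deriv g x * E x + g x * (Real.exp (-(F' x)) * (-(φ x))))
        (fun x _ => (((hgdiff x).hasDerivAt.mul (HE x))).hasDerivWithinAt) hψint ?_
      intro x hx
      have hxI : x ∈ Icc (0:ℝ) T := Ioo_subset_Icc_self hx
      have h1 : deriv g x ≤ γ x * g x + c x := hder x hxI
      have h2 : 0 ≤ g x := hgpos x hxI
      have h3 : 0 < E x := hEpos x
      have h4 : γ x * g x - φ x * g x ≤ |γ x - φ x| * g x := by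
        have := mul_le_mul_of_nonneg_right (le_abs_self (γ x - φ x)) h2
        linarith [this, sub_mul (γ x) (φ x) (g x)]
      have h5 : deriv g x - φ x * g x ≤ c x + |γ x - φ x| * g x := by linarith
      have hEx : Real.exp (-(F' x)) = E x := rfl
      calc deriv g x * E x + g x * (Real.exp (-(F' x)) * (-(φ x)))
          = (deriv g x - φ x * g x) * E x := by rw [hEx]; ring
        _ ≤ (c x + |γ x - φ x| * g x) * E x := mul_le_mul_of_nonneg_right h5 h3.le
    have hu0 : u 0 = g 0 := by
      simp only [hu, hE, hF', intervalIntegral.integral_same, neg_zero, Real.exp_zero, mul_one]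
    -- bound the right-hand side integral
    have hψle : (∫ x in (0:ℝ)..T, ψ x)
        ≤ (∫ x in (0:ℝ)..T, c x * ν x) + 2*K*δ*Cq + M*K*δ := by
      have hpt : ∀ x ∈ Icc (0:ℝ) T,
          ψ x ≤ c x * ν x + (2*K*δ) * c x + (M*K) * |γ x - φ x| := by
        intro x hx
        have h2 : 0 ≤ g x := hgpos x hx
        have h3 : 0 < E x := hEpos x
        have hcx : 0 ≤ c x := hcpos x hx
        have hEKx := hEK x hx
        have hEνx := hEν x hx
        have hgMx := hgM x hx
        have e1 : c x * E x ≤ c x * ν x + (2*K*δ) * c x := by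
          have : E x ≤ ν x + 2*K*δ := by
            have := abs_le.1 hEνx
            linarith [this.2]
          nlinarith
        have e2 : |γ x - φ x| * g x * E x ≤ (M*K) * |γ x - φ x| := by
          have ha : 0 ≤ |γ x - φ x| := abs_nonneg _
          have : g x * E x ≤ M * K :=
            mul_le_mul hgMx hEKx h3.le hMnn
          nlinarith
        calc ψ x = c x * E x + |γ x - φ x| * g x * E x := by rw [hψ]; ring
          _ ≤ c x * ν x + (2*K*δ) * c x + (M*K) * |γ x - φ x| := by linarith
      have hrhsI : IntegrableOn
          (fun x => c x * ν x + (2*K*δ) * c x + (M*K) * |γ x - φ x|) (Icc 0 T) := by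
        exact ((hc.mul_continuousOn hνc.continuousOn isCompact_Icc).add
          (hc.continuousOn_mul continuousOn_const isCompact_Icc)).add
          (habsI.continuousOn_mul continuousOn_const isCompact_Icc)
      calc (∫ x in (0:ℝ)..T, ψ x)
          ≤ ∫ x in (0:ℝ)..T, (c x * ν x + (2*K*δ) * c x + (M*K) * |γ x - φ x|) :=
            intervalIntegral.integral_mono_on hT (toII hψint) (toII hrhsI) hpt
        _ = (∫ x in (0:ℝ)..T, c x * ν x) + (2*K*δ) * (∫ x in (0:ℝ)..T, c x)
            + (M*K) * ∫ x in (0:ℝ)..T, |γ x - φ x| := by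
            rw [intervalIntegral.integral_add, intervalIntegral.integral_add,
              intervalIntegral.integral_const_mul, intervalIntegral.integral_const_mul]
            · exact toII (hc.mul_continuousOn hνc.continuousOn isCompact_Icc)
            · exact toII (hc.continuousOn_mul continuousOn_const isCompact_Icc)
            · exact (toII (hc.mul_continuousOn hνc.continuousOn isCompact_Icc)).add
                (toII (hc.continuousOn_mul continuousOn_const isCompact_Icc))
            · exact toII (habsI.continuousOn_mul continuousOn_const isCompact_Icc)
        _ ≤ (∫ x in (0:ℝ)..T, c x * ν x) + 2*K*δ*Cq + M*K*δ := by
            have i1 : (∫ x in (0:ℝ)..T, c x) ≤ Cq := by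
              rw [intervalIntegral.integral_of_le hT]
              refine setIntegral_mono_set hc
                ((ae_restrict_iff' measurableSet_Icc).2 (Filter.Eventually.of_forall hcpos)) ?_
              exact (Ioc_subset_Icc_self : Ioc (0:ℝ) T ⊆ Icc 0 T).eventuallyLE
            have i2 : (∫ x in (0:ℝ)..T, |γ x - φ x|) ≤ δ := by
              rw [intervalIntegral.integral_of_le hT]
              refine le_trans ?_ hφd
              refine setIntegral_mono_set habsI
                (Filter.Eventually.of_forall fun x => abs_nonneg _) ?_
              exact (Ioc_subset_Icc_self : Ioc (0:ℝ) T ⊆ Icc 0 T).eventuallyLE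
            have : 0 ≤ 2*K*δ := by positivity
            nlinarith [mul_le_mul_of_nonneg_left i1 this,
              mul_le_mul_of_nonneg_left i2 (by positivity : (0:ℝ) ≤ M*K)]
    -- assemble
    have hTmem : T ∈ Icc (0:ℝ) T := ⟨hT, le_refl T⟩
    have hfinal : g T * (ν T - E T) ≤ M * (2*K*δ) := by
      have h1 : g T * (ν T - E T) ≤ g T * |ν T - E T| := by
        have := le_abs_self (ν T - E T)
        exact mul_le_mul_of_nonneg_left this (hgpos T hTmem)
      have h2 : |ν T - E T| ≤ 2*K*δ := by rw [abs_sub_comm]; exact hEν T hTmem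
      calc g T * (ν T - E T) ≤ g T * |ν T - E T| := h1
        _ ≤ M * (2*K*δ) := mul_le_mul (hgM T hTmem) h2 (abs_nonneg _) hMnn
    have : g T * ν T - g 0 = (u T - u 0) + g T * (ν T - E T) := by
      rw [hu0]; simp only [hu]; ring
    rw [this]
    calc (u T - u 0) + g T * (ν T - E T)
        ≤ (∫ x in (0:ℝ)..T, ψ x) + M * (2*K*δ) := add_le_add husub hfinal
      _ ≤ (∫ x in (0:ℝ)..T, c x * ν x) + 2*K*δ*Cq + M*K*δ + M*(2*K*δ) := by linarith
      _ = (∫ x in (0:ℝ)..T, c x * ν x) + CC * δ := by rw [hCC]; ring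
  -- conclude by letting δ → 0
  refine le_of_forall_pos_le_add fun ε hε => ?_
  have hδpos : 0 < min 1 (ε / (CC + 1)) := lt_min one_pos (by positivity)
  have h := key (min 1 (ε / (CC + 1))) hδpos (min_le_left _ _)
  refine le_trans h ?_
  have h1 : CC * min 1 (ε / (CC + 1)) ≤ CC * (ε / (CC + 1)) :=
    mul_le_mul_of_nonneg_left (min_le_right _ _) hCCnn
  have h2 : CC * (ε / (CC + 1)) ≤ ε := by
    rw [mul_div_assoc']
    rw [div_le_iff₀ (by linarith)]
    nlinarith
  linarith


lemma my_bihari (a q : ℝ → ℝ) (z0 p T : ℝ) (hz0 : 0 < z0) (hp : 1 < p) (hT : 0 ≤ T)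
    (ha : IntegrableOn a (Icc 0 T)) (hq : IntegrableOn q (Icc 0 T))
    (hqpos : ∀ x ∈ Icc 0 T, 0 ≤ q x) (hapos : ∀ x ∈ Icc 0 T, 0 ≤ a x)
    (hcomp : ∀ x ∈ Icc 0 T, q x ≤ a x * (z0 + ∫ y in (0:ℝ)..x, q y) ^ p) :
    z0 ^ (1-p) - (z0 + ∫ y in (0:ℝ)..T, q y) ^ (1-p) ≤ (p-1) * ∫ y in (0:ℝ)..T, a y := by
  have toII : ∀ {f : ℝ → ℝ}, IntegrableOn f (Icc 0 T) → IntervalIntegrable f volume 0 T :=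
    fun h => (intervalIntegrable_iff_integrableOn_Ioc_of_le hT).2 (h.mono_set Ioc_subset_Icc_self)
  set z : ℝ → ℝ := fun s => z0 + ∫ y in (0:ℝ)..s, q y with hzdef
  have hqII : ∀ s ∈ Icc (0:ℝ) T, IntervalIntegrable q volume 0 s := fun s hs =>
    (intervalIntegrable_iff_integrableOn_Ioc_of_le hs.1).2
      ((hq.mono_set Ioc_subset_Icc_self).mono_set (Ioc_subset_Ioc le_rfl hs.2))
  have hz_lb : ∀ s ∈ Icc (0:ℝ) T, z0 ≤ z s := by
    intro s hs
    have : 0 ≤ ∫ y in (0:ℝ)..s, q y :=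
      intervalIntegral.integral_nonneg hs.1 fun u hu => hqpos u ⟨hu.1, le_trans hu.2 hs.2⟩
    simp only [hzdef]; linarith
  have hzpos : ∀ s ∈ Icc (0:ℝ) T, 0 < z s := fun s hs => lt_of_lt_of_le hz0 (hz_lb s hs)
  set Q : ℝ → ℝ := fun s => ∫ y in (0:ℝ)..s, q y with hQdef
  set Qtot : ℝ := ∫ x in Icc (0:ℝ) T, q x with hQt
  have hQtnn : 0 ≤ Qtot := setIntegral_nonneg measurableSet_Icc hqpos
  set CC : ℝ := (p-1) * (2 * z0 ^ (-p) + p * z0 ^ (-p-1) * Qtot) with hCC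
  have hCCnn : 0 ≤ CC := by
    have h1 : (0:ℝ) < z0 ^ (-p) := Real.rpow_pos_of_pos hz0 _
    have h2 : (0:ℝ) < z0 ^ (-p-1) := Real.rpow_pos_of_pos hz0 _
    have : (0:ℝ) ≤ p - 1 := by linarith
    positivity
  have key : ∀ δ : ℝ, 0 < δ → δ ≤ 1 →
      z0 ^ (1-p) - z T ^ (1-p) ≤ (p-1) * (∫ y in (0:ℝ)..T, a y) + CC * δ := by
    intro δ hδ hδ1
    obtain ⟨φ, hφc, hφd⟩ := my_cont_approx hq hδ
    set q' : ℝ → ℝ := fun x => max (φ x) 0 with hq'def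
    have hq'c : Continuous q' := hφc.max continuous_const
    have hq'nn : ∀ x, 0 ≤ q' x := fun x => le_max_right _ _
    have hqq' : ∀ x ∈ Icc (0:ℝ) T, |q x - q' x| ≤ |q x - φ x| := by
      intro x hx
      rcases le_total 0 (φ x) with h | h
      · simp [hq'def, max_eq_left h]
      · have : q' x = 0 := max_eq_right h
        rw [this]
        rw [abs_of_nonneg (by simpa using hqpos x hx), abs_sub_comm]
        rw [abs_of_nonpos (by linarith [hqpos x hx] : φ x - q x ≤ 0)]
        linarith [hqpos x hx]
    have hq'd : (∫ x in Icc (0:ℝ) T, |q x - q' x|) ≤ δ := by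
      refine le_trans (setIntegral_mono_on ?_ ?_ measurableSet_Icc hqq') hφd
      · exact (hq.sub hq'c.integrableOn_Icc).abs
      · exact (hq.sub hφc.integrableOn_Icc).abs
    set z' : ℝ → ℝ := fun s => z0 + ∫ y in (0:ℝ)..s, q' y with hz'def
    have Hz' : ∀ s, HasDerivAt z' (q' s) s := by
      intro s
      have := intervalIntegral.integral_hasDerivAt_right (hq'c.intervalIntegrable 0 s)
        (hq'c.stronglyMeasurableAtFilter _ _) hq'c.continuousAt
      exact this.const_add z0
    have hz'c : Continuous z' := continuous_const.add
      (intervalIntegral.continuous_primitive (fun a b => hq'c.intervalIntegrable a b) 0)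
    have hz'_lb : ∀ s, 0 ≤ s → z0 ≤ z' s := by
      intro s hs
      have : 0 ≤ ∫ y in (0:ℝ)..s, q' y :=
        intervalIntegral.integral_nonneg hs fun u hu => hq'nn u
      simp only [hz'def]; linarith
    have hz'pos : ∀ s, 0 ≤ s → 0 < z' s := fun s hs => lt_of_lt_of_le hz0 (hz'_lb s hs)
    have hzz' : ∀ s ∈ Icc (0:ℝ) T, |z s - z' s| ≤ δ := by
      intro s hs
      have heq : z s - z' s = ∫ y in (0:ℝ)..s, (q y - q' y) := by
        simp only [hzdef, hz'def]
        rw [intervalIntegral.integral_sub (hqII s hs) (hq'c.intervalIntegrable 0 s)]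
        ring
      rw [heq]
      calc |∫ y in (0:ℝ)..s, (q y - q' y)| ≤ ∫ y in (0:ℝ)..s, |q y - q' y| :=
            intervalIntegral.abs_integral_le_integral_abs hs.1
        _ = ∫ y in Ioc (0:ℝ) s, |q y - q' y| := intervalIntegral.integral_of_le hs.1
        _ ≤ ∫ x in Icc (0:ℝ) T, |q x - q' x| := by
            refine setIntegral_mono_set ((hq.sub hq'c.integrableOn_Icc).abs)
              (Filter.Eventually.of_forall fun x => abs_nonneg _) ?_
            exact HasSubset.Subset.eventuallyLE
              (fun x hx => ⟨le_of_lt hx.1, le_trans hx.2 hs.2⟩)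
        _ ≤ δ := hq'd
    -- FTC for Ψ = z'^(1-p)
    have hFTC : z' T ^ (1-p) - z0 ^ (1-p) = ∫ x in (0:ℝ)..T, (1-p) * z' x ^ (-p) * q' x := by
      have hint : ∀ x ∈ Icc (0:ℝ) T,
          HasDerivAt (fun s => z' s ^ (1-p)) ((1-p) * z' x ^ (-p) * q' x) x := by
        intro x hx
        have h1 : HasDerivAt (fun s => z' s ^ (1-p)) ((1-p) * z' x ^ (1-p-1) * q' x) x :=
          (Real.hasDerivAt_rpow_const (Or.inl (ne_of_gt (hz'pos x hx.1)))).comp x (Hz' x)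
        have : (1:ℝ) - p - 1 = -p := by ring
        rwa [this] at h1
      have hcont : ContinuousOn (fun x : ℝ => (1-p) * z' x ^ (-p) * q' x) (Icc 0 T) := by
        apply ContinuousOn.mul _ hq'c.continuousOn
        apply ContinuousOn.mul continuousOn_const
        exact ContinuousOn.rpow_const hz'c.continuousOn
          (fun x hx => Or.inl (ne_of_gt (hz'pos x hx.1)))
      have := intervalIntegral.integral_eq_sub_of_hasDerivAt
        (f := fun s => z' s ^ (1-p)) (fun x hx => hint x (by rwa [uIcc_of_le hT] at hx))
        (hcont.mono (by rw [uIcc_of_le hT])).intervalIntegrable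
      rw [this]
      have h0 : z' 0 = z0 := by simp [hz'def]
      rw [h0]
    -- pointwise bound for the integrand
    have hbound : ∀ x ∈ Icc (0:ℝ) T,
        z' x ^ (-p) * q' x ≤ a x + z0 ^ (-p) * |q' x - q x| + (p * z0 ^ (-p-1) * δ) * q x := by
      intro x hx
      have hzx := hzpos x hx
      have hz'x := hz'pos x hx.1
      have hq'x := hq'nn x
      have hqx := hqpos x hx
      have h1 : z' x ^ (-p) ≤ z0 ^ (-p) :=
        Real.rpow_le_rpow_of_nonpos hz0 (hz'_lb x hx.1) (by linarith)
      have h1' : (0:ℝ) < z' x ^ (-p) := Real.rpow_pos_of_pos hz'x _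
      have h2 : |z' x ^ (-p) - z x ^ (-p)| ≤ p * z0 ^ (-p-1) * δ := by
        have := my_rpow_lip_abs (e := -p) (by linarith) hz0 (z' x) (z x)
          (hz'_lb x hx.1) (hz_lb x hx)
        have habs : |z' x - z x| ≤ δ := by rw [abs_sub_comm]; exact hzz' x hx
        have hexp : -p - 1 = -p - 1 := rfl
        calc |z' x ^ (-p) - z x ^ (-p)| ≤ (-(-p)) * z0 ^ (-p-1) * |z' x - z x| := this
          _ ≤ p * z0 ^ (-p-1) * δ := by
              have hpz : (0:ℝ) < z0 ^ (-p-1) := Real.rpow_pos_of_pos hz0 _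
              have : (-(-p)) = p := by ring
              rw [this]
              apply mul_le_mul_of_nonneg_left habs
              positivity
      have h3 : z x ^ (-p) * q x ≤ a x := by
        have hc := hcomp x hx
        have : z x ^ (-p) * q x ≤ z x ^ (-p) * (a x * z x ^ p) := by
          apply mul_le_mul_of_nonneg_left hc (Real.rpow_pos_of_pos hzx _).le
        refine le_trans this ?_
        rw [Real.rpow_neg hzx.le]
        rw [show (z x ^ p)⁻¹ * (a x * z x ^ p) = a x * ((z x ^ p)⁻¹ * z x ^ p) by ring]
        rw [inv_mul_cancel₀ (ne_of_gt (Real.rpow_pos_of_pos hzx _))]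
        simp
      -- combine
      have e1 : z' x ^ (-p) * q' x ≤ z' x ^ (-p) * q x + z' x ^ (-p) * |q' x - q x| := by
        have : q' x ≤ q x + |q' x - q x| := by
          have := le_abs_self (q' x - q x)
          linarith
        nlinarith
      have e2 : z' x ^ (-p) * q x ≤ z x ^ (-p) * q x + (p * z0 ^ (-p-1) * δ) * q x := by
        have := abs_le.1 h2
        nlinarith [this.2]
      have e3 : z' x ^ (-p) * |q' x - q x| ≤ z0 ^ (-p) * |q' x - q x| :=
        mul_le_mul_of_nonneg_right h1 (abs_nonneg _)
      linarith
    -- integrate the bound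
    have hlhsI : IntegrableOn (fun x => z' x ^ (-p) * q' x) (Icc 0 T) := by
      apply ContinuousOn.integrableOn_Icc
      apply ContinuousOn.mul _ hq'c.continuousOn
      exact ContinuousOn.rpow_const hz'c.continuousOn
        (fun x hx => Or.inl (ne_of_gt (hz'pos x hx.1)))
    have habsqI : IntegrableOn (fun x => |q' x - q x|) (Icc 0 T) :=
      (hq'c.integrableOn_Icc.sub hq).abs
    have hrhsI : IntegrableOn
        (fun x => a x + z0 ^ (-p) * |q' x - q x| + (p * z0 ^ (-p-1) * δ) * q x) (Icc 0 T) := by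
      exact (ha.add (habsqI.continuousOn_mul continuousOn_const isCompact_Icc)).add
        (hq.continuousOn_mul continuousOn_const isCompact_Icc)
    have hIbound : (∫ x in (0:ℝ)..T, z' x ^ (-p) * q' x)
        ≤ (∫ y in (0:ℝ)..T, a y) + z0 ^ (-p) * δ + (p * z0 ^ (-p-1) * δ) * Qtot := by
      calc (∫ x in (0:ℝ)..T, z' x ^ (-p) * q' x)
          ≤ ∫ x in (0:ℝ)..T,
              (a x + z0 ^ (-p) * |q' x - q x| + (p * z0 ^ (-p-1) * δ) * q x) :=
            intervalIntegral.integral_mono_on hT (toII hlhsI) (toII hrhsI) hbound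
        _ = (∫ y in (0:ℝ)..T, a y) + z0 ^ (-p) * (∫ x in (0:ℝ)..T, |q' x - q x|)
            + (p * z0 ^ (-p-1) * δ) * (∫ x in (0:ℝ)..T, q x) := by
            rw [intervalIntegral.integral_add, intervalIntegral.integral_add,
              intervalIntegral.integral_const_mul, intervalIntegral.integral_const_mul]
            · exact toII ha
            · exact toII (habsqI.continuousOn_mul continuousOn_const isCompact_Icc)
            · exact (toII ha).add
                (toII (habsqI.continuousOn_mul continuousOn_const isCompact_Icc))
            · exact toII (hq.continuousOn_mul continuousOn_const isCompact_Icc)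
        _ ≤ (∫ y in (0:ℝ)..T, a y) + z0 ^ (-p) * δ + (p * z0 ^ (-p-1) * δ) * Qtot := by
            have i1 : (∫ x in (0:ℝ)..T, |q' x - q x|) ≤ δ := by
              rw [intervalIntegral.integral_of_le hT]
              refine le_trans ?_ hq'd
              have : (∫ x in Ioc (0:ℝ) T, |q' x - q x|) = ∫ x in Ioc (0:ℝ) T, |q x - q' x| := by
                simp [abs_sub_comm]
              rw [this]
              refine setIntegral_mono_set ((hq.sub hq'c.integrableOn_Icc).abs)
                (Filter.Eventually.of_forall fun x => abs_nonneg _) ?_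
              exact (Ioc_subset_Icc_self : Ioc (0:ℝ) T ⊆ Icc 0 T).eventuallyLE
            have i2 : (∫ x in (0:ℝ)..T, q x) ≤ Qtot := by
              rw [intervalIntegral.integral_of_le hT]
              refine setIntegral_mono_set hq
                ((ae_restrict_iff' measurableSet_Icc).2 (Filter.Eventually.of_forall hqpos)) ?_
              exact (Ioc_subset_Icc_self : Ioc (0:ℝ) T ⊆ Icc 0 T).eventuallyLE
            have hpz1 : (0:ℝ) < z0 ^ (-p) := Real.rpow_pos_of_pos hz0 _
            have hpz2 : (0:ℝ) < z0 ^ (-p-1) := Real.rpow_pos_of_pos hz0 _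
            have hfac : (0:ℝ) ≤ p * z0 ^ (-p-1) * δ := by positivity
            nlinarith [mul_le_mul_of_nonneg_left i1 hpz1.le,
              mul_le_mul_of_nonneg_left i2 hfac]
    -- endpoint comparison
    have hTmem : T ∈ Icc (0:ℝ) T := ⟨hT, le_refl T⟩
    have hend : |z' T ^ (1-p) - z T ^ (1-p)| ≤ (p-1) * z0 ^ (-p) * δ := by
      have hlip := my_rpow_lip_abs (e := 1-p) (by linarith) hz0 (z' T) (z T)
        (hz'_lb T hT) (hz_lb T hTmem)
      have habs : |z' T - z T| ≤ δ := by rw [abs_sub_comm]; exact hzz' T hTmem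
      have hfix : (1:ℝ) - p - 1 = -p := by ring
      rw [hfix] at hlip
      have : -(1-p) = p - 1 := by ring
      rw [this] at hlip
      refine le_trans hlip ?_
      apply mul_le_mul_of_nonneg_left habs
      have hpp : (0:ℝ) < z0 ^ (-p) := Real.rpow_pos_of_pos hz0 _
      exact mul_nonneg (by linarith) hpp.le
    -- assemble
    have hsum : z0 ^ (1-p) - z' T ^ (1-p) = (p-1) * ∫ x in (0:ℝ)..T, z' x ^ (-p) * q' x := by
      rw [show (p-1) * (∫ x in (0:ℝ)..T, z' x ^ (-p) * q' x)
          = -∫ x in (0:ℝ)..T, (1-p) * z' x ^ (-p) * q' x from ?_]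
      · rw [← hFTC]; ring
      · rw [← intervalIntegral.integral_neg, ← intervalIntegral.integral_const_mul]
        congr 1
        ext x
        ring
    have hA := abs_le.1 hend
    have hz0p : (0:ℝ) < z0 ^ (-p) := Real.rpow_pos_of_pos hz0 _
    have step : z0 ^ (1-p) - z T ^ (1-p)
        ≤ (p-1) * ((∫ y in (0:ℝ)..T, a y) + z0 ^ (-p) * δ + (p * z0 ^ (-p-1) * δ) * Qtot)
          + (p-1) * z0 ^ (-p) * δ := by
      have h1 : z0 ^ (1-p) - z T ^ (1-p)
          = (z0 ^ (1-p) - z' T ^ (1-p)) + (z' T ^ (1-p) - z T ^ (1-p)) := by ring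
      rw [h1, hsum]
      have h2 : (p-1) * (∫ x in (0:ℝ)..T, z' x ^ (-p) * q' x)
          ≤ (p-1) * ((∫ y in (0:ℝ)..T, a y) + z0 ^ (-p) * δ + (p * z0 ^ (-p-1) * δ) * Qtot) :=
        mul_le_mul_of_nonneg_left hIbound (by linarith)
      linarith [hA.2]
    refine le_trans step ?_
    rw [hCC]
    have hpz2 : (0:ℝ) < z0 ^ (-p-1) := Real.rpow_pos_of_pos hz0 _
    nlinarith [hδ.le]
  -- conclude
  show z0 ^ (1-p) - z T ^ (1-p) ≤ (p-1) * ∫ y in (0:ℝ)..T, a y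
  refine le_of_forall_pos_le_add fun ε hε => ?_
  have hδpos : 0 < min 1 (ε / (CC + 1)) := lt_min one_pos (by positivity)
  have h := key (min 1 (ε / (CC + 1))) hδpos (min_le_left _ _)
  refine le_trans h ?_
  have h1 : CC * min 1 (ε / (CC + 1)) ≤ CC * (ε / (CC + 1)) :=
    mul_le_mul_of_nonneg_left (min_le_right _ _) hCCnn
  have h2 : CC * (ε / (CC + 1)) ≤ ε := by
    rw [mul_div_assoc', div_le_iff₀ (by linarith)]
    nlinarith
  linarith


theorem key_estimate_thm23
    (g γ α β ν : ℝ → ℝ) (p ω : ℝ) (hp : 1 < p) (hω : 0 < ω)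
    (hγ : LocallyIntegrable γ) (hα : LocallyIntegrable α) (hβ : LocallyIntegrable β)
    (hαpos : ∀ t, 0 ≤ α t) (hβpos : ∀ t, 0 ≤ β t)
    (hg0 : ∀ t ≥ 0, 0 ≤ g t) (hgdiff : Differentiable ℝ g)
    (hineq : ∀ t ≥ 0, deriv g t ≤ γ t * g t + α t * g t ^ p + β t)
    (hν : ∀ t, ν t = Real.exp (-∫ ξ in (0:ℝ)..t, γ ξ))
    (hsmall : ∀ t ≥ 0, β t * ν t ^ p ≤ ω ^ p * α t)
    (hαν : IntegrableOn (fun ξ => α ξ / ν ξ ^ (p - 1)) (Set.Ioi (0:ℝ)))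
    (hinit : (p - 1) * (∫ ξ in Set.Ioi (0:ℝ), α ξ / ν ξ ^ (p - 1)) < (g 0 + ω) ^ (1 - p)) :
    ∀ t ≥ 0, (g t * ν t + ω) ^ (p - 1) ≤
      1 / ((g 0 + ω) ^ (1 - p) - (p - 1) * ∫ ξ in (0:ℝ)..t, α ξ / ν ξ ^ (p - 1)) := by
  intro t ht
  have hγiv : ∀ a b : ℝ, IntervalIntegrable γ volume a b := fun a b =>
    (hγ.integrableOn_isCompact isCompact_uIcc).intervalIntegrable
  have hνpos : ∀ s, 0 < ν s := fun s => (hν s) ▸ Real.exp_pos _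
  have hνc : Continuous ν :=
    (Real.continuous_exp.comp (intervalIntegral.continuous_primitive hγiv 0).neg).congr
      fun s => (hν s).symm
  have hν0 : ν 0 = 1 := by rw [hν 0, intervalIntegral.integral_same, neg_zero, Real.exp_zero]
  set A : ℝ → ℝ := fun ξ => α ξ / ν ξ ^ (p - 1) with hAdef
  have hApos : ∀ ξ, 0 ≤ A ξ := fun ξ =>
    div_nonneg (hαpos ξ) (Real.rpow_pos_of_pos (hνpos ξ) _).le
  have haI : IntegrableOn A (Set.Icc 0 t) :=
    (integrableOn_Icc_iff_integrableOn_Ioc enorm_ne_top).2 (hαν.mono_set Set.Ioc_subset_Ioi_self)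
  set c : ℝ → ℝ := fun ξ => α ξ * g ξ ^ p + β ξ with hcdef
  have hgpC : ContinuousOn (fun ξ => g ξ ^ p) (Set.Icc 0 t) :=
    ContinuousOn.rpow_const hgdiff.continuous.continuousOn
      (fun x _ => Or.inr (by linarith : (0:ℝ) ≤ p))
  have hcI : IntegrableOn c (Set.Icc 0 t) :=
    ((hα.integrableOn_isCompact isCompact_Icc).mul_continuousOn hgpC isCompact_Icc).add
      (hβ.integrableOn_isCompact isCompact_Icc)
  have hcpos : ∀ s ∈ Set.Icc (0:ℝ) t, 0 ≤ c s := by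
    intro s hs
    have h1 : 0 ≤ g s ^ p := Real.rpow_nonneg (hg0 s hs.1) p
    have := hαpos s
    have := hβpos s
    simp only [hcdef]
    positivity
  have hder : ∀ s ∈ Set.Icc (0:ℝ) t, deriv g s ≤ γ s * g s + c s := by
    intro s hs
    have := hineq s hs.1
    simp only [hcdef]
    linarith
  set q : ℝ → ℝ := fun ξ => c ξ * ν ξ with hqdef
  have hqI : IntegrableOn q (Set.Icc 0 t) :=
    hcI.mul_continuousOn hνc.continuousOn isCompact_Icc
  have hqpos : ∀ s ∈ Set.Icc (0:ℝ) t, 0 ≤ q s := fun s hs =>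
    mul_nonneg (hcpos s hs) (hνpos s).le
  have hz0 : 0 < g 0 + ω := by have := hg0 0 le_rfl; linarith
  -- step A : g s * ν s + ω ≤ z s on [0, t]
  have hStepA : ∀ s ∈ Set.Icc (0:ℝ) t, g s * ν s + ω ≤ (g 0 + ω) + ∫ x in (0:ℝ)..s, q x := by
    intro s hs
    have := my_gronwall_prod g γ c ν s hs.1 hγiv
      (hcI.mono_set (Set.Icc_subset_Icc le_rfl hs.2)) hgdiff
      (fun x hx => hg0 x hx.1)
      (fun x hx => hcpos x ⟨hx.1, le_trans hx.2 hs.2⟩)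
      (fun x hx => hder x ⟨hx.1, le_trans hx.2 hs.2⟩) hν
    linarith
  -- comparison hypothesis for Bihari
  have hcomp : ∀ x ∈ Set.Icc (0:ℝ) t,
      q x ≤ A x * ((g 0 + ω) + ∫ y in (0:ℝ)..x, q y) ^ p := by
    intro x hx
    have hνx := hνpos x
    have hgx : 0 ≤ g x := hg0 x hx.1
    have hνp1 : (0:ℝ) < ν x ^ (p-1) := Real.rpow_pos_of_pos hνx _
    have hsplitν : ν x ^ p = ν x ^ (p-1) * ν x := by
      rw [← Real.rpow_add_one (ne_of_gt hνx) (p-1)]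
      congr 1
      ring
    have claim1 : α x * g x ^ p * ν x = A x * (g x * ν x) ^ p := by
      rw [hAdef]
      simp only []
      rw [Real.mul_rpow hgx hνx.le, hsplitν]
      field_simp
    have claim2 : β x * ν x ≤ ω ^ p * A x := by
      have hs := hsmall x hx.1
      have h2 : β x * ν x ^ p / ν x ^ (p-1) ≤ ω ^ p * α x / ν x ^ (p-1) := by
        exact div_le_div_of_nonneg_right hs hνp1.le
      rw [hsplitν] at h2
      rw [show β x * (ν x ^ (p-1) * ν x) / ν x ^ (p-1)
          = β x * ν x * (ν x ^ (p-1) / ν x ^ (p-1)) by ring] at h2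
      rw [div_self (ne_of_gt hνp1), mul_one] at h2
      calc β x * ν x ≤ ω ^ p * α x / ν x ^ (p-1) := h2
        _ = ω ^ p * A x := by rw [hAdef]; simp only []; ring
    have hsum : (g x * ν x) ^ p + ω ^ p ≤ (g x * ν x + ω) ^ p :=
      my_rpow_add_le (mul_nonneg hgx hνx.le) hω.le hp.le
    have hz : g x * ν x + ω ≤ (g 0 + ω) + ∫ y in (0:ℝ)..x, q y := hStepA x hx
    have hmono : (g x * ν x + ω) ^ p ≤ ((g 0 + ω) + ∫ y in (0:ℝ)..x, q y) ^ p :=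
      Real.rpow_le_rpow (by positivity) hz (by linarith)
    have hAx := hApos x
    calc q x = α x * g x ^ p * ν x + β x * ν x := by rw [hqdef, hcdef]; ring
      _ ≤ A x * (g x * ν x) ^ p + ω ^ p * A x := by
          rw [claim1]; linarith
      _ = A x * ((g x * ν x) ^ p + ω ^ p) := by ring
      _ ≤ A x * (g x * ν x + ω) ^ p := mul_le_mul_of_nonneg_left hsum hAx
      _ ≤ A x * ((g 0 + ω) + ∫ y in (0:ℝ)..x, q y) ^ p :=
          mul_le_mul_of_nonneg_left hmono hAx
  -- apply Bihari
  have hbih := my_bihari A q (g 0 + ω) p t hz0 hp ht haI hqI hqpos (fun x _ => hApos x) hcomp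
  -- positivity of the denominator
  have hIle : (∫ x in (0:ℝ)..t, A x) ≤ ∫ ξ in Set.Ioi (0:ℝ), A ξ := by
    rw [intervalIntegral.integral_of_le ht]
    refine setIntegral_mono_set hαν
      ((ae_restrict_iff' measurableSet_Ioi).2
        (Filter.Eventually.of_forall (fun x _ => hApos x))) ?_
    exact (Set.Ioc_subset_Ioi_self : Set.Ioc (0:ℝ) t ⊆ Set.Ioi 0).eventuallyLE
  have hD : 0 < (g 0 + ω) ^ (1-p) - (p-1) * ∫ x in (0:ℝ)..t, A x := by
    have h1 : (p-1) * (∫ x in (0:ℝ)..t, A x) ≤ (p-1) * ∫ ξ in Set.Ioi (0:ℝ), A ξ :=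
      mul_le_mul_of_nonneg_left hIle (by linarith)
    have h2 : (1:ℝ) - p = 1 - p := rfl
    linarith [hinit]
  -- endgame
  have hzt := hStepA t ⟨ht, le_rfl⟩
  have hh : 0 < g t * ν t + ω := by
    have := mul_nonneg (hg0 t ht) (hνpos t).le
    linarith
  have hcompare : ((g 0 + ω) + ∫ y in (0:ℝ)..t, q y) ^ (1-p) ≤ (g t * ν t + ω) ^ (1-p) :=
    Real.rpow_le_rpow_of_nonpos hh hzt (by linarith)
  have hble : (g 0 + ω) ^ (1-p) - (p-1) * (∫ x in (0:ℝ)..t, A x) ≤ (g t * ν t + ω) ^ (1-p) := by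
    linarith
  have hgoal : (g t * ν t + ω) ^ (p-1) = ((g t * ν t + ω) ^ (1-p))⁻¹ := by
    rw [← Real.rpow_neg hh.le]
    congr 1
    ring
  rw [hgoal, one_div]
  exact inv_anti₀ hD hble
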